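/- Under MA for countable posets, every crowded countable topological space of π-weight less than the continuum is selectively separable. -/

import Mathlib

def DenseBelow {P : Type} [Preorder P] (D : Set P) : Prop :=
  ∀ p : P, ∃ q ∈ D, q ≤ p

def IsPosetFilter {P : Type} [Preorder P] (G : Set P) : Prop :=
  G.Nonempty ∧ (∀ p ∈ G, ∀ q : P, p ≤ q → q ∈ G) ∧
    ∀ p ∈ G, ∀ q ∈ G, ∃ r ∈ G, r ≤ p ∧ r ≤ q

/-- Martin's Axiom for countable posets. -/
def MACtble : Prop :=
  ∀ (P : Type) [Preorder P] [Countable P] (𝒟 : Set (Set P)),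
    Cardinal.mk 𝒟 < Cardinal.continuum → (∀ D ∈ 𝒟, DenseBelow D) →
    ∃ G : Set P, IsPosetFilter G ∧ ∀ D ∈ 𝒟, (G ∩ D).Nonempty

/-- A π-base for a topological space. -/
def IsPiBase {X : Type} (t : TopologicalSpace X) (B : Set (Set X)) : Prop :=
  (∀ U ∈ B, @IsOpen X t U ∧ U.Nonempty) ∧
  ∀ V : Set X, @IsOpen X t V → V.Nonempty → ∃ U ∈ B, U ⊆ V

/-- The π-weight: least cardinality of a π-base. -/
noncomputable def piweight {X : Type} (t : TopologicalSpace X) : Cardinal :=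
  ⨅ B : {B : Set (Set X) // IsPiBase t B}, Cardinal.mk ↥B.1

/-- Selective separability. -/
def SelectivelySeparable (X : Type) [TopologicalSpace X] : Prop :=
  ∀ D : ℕ → Set X, (∀ n, Dense (D n)) →
    ∃ F : ℕ → Set X, (∀ n, F n ⊆ D n ∧ (F n).Finite) ∧ Dense (⋃ n, F n)

section Aux

variable {X : Type} [Countable X] (D : ℕ → Set X)

/-- Conditions: finite sequences of finite sets, with the `k`-th set inside `D k`. -/
def SSPoset : Type :=
  {l : List (Finset X) // ∀ k, (h : k < l.length) → (↑(l[k]) : Set X) ⊆ D k}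

instance : Preorder (SSPoset D) where
  le p q := q.1 <+: p.1
  le_refl p := List.prefix_refl _
  le_trans p q r h1 h2 := List.IsPrefix.trans h2 h1

instance : Countable (SSPoset D) := by
  unfold SSPoset; infer_instance

end Aux

/-- under MA(ctble), every crowded countable space of π-weight less
than the continuum is selectively separable. -/
theorem statement9 (hMA : MACtble) (X : Type) [Countable X] [t : TopologicalSpace X]
    (hcrowded : ∀ x : X, ¬ IsOpen ({x} : Set X))
    (hw : piweight t < Cardinal.continuum) :
    SelectivelySeparable X := by
  -- get a π-base of size < continuum
  have hne : Nonempty {B : Set (Set X) // IsPiBase t B} :=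
    ⟨⟨{U | IsOpen U ∧ U.Nonempty}, fun U hU => hU, fun V hV hVne => ⟨V, ⟨hV, hVne⟩, subset_rfl⟩⟩⟩
  obtain ⟨⟨B, hB⟩, hBlt⟩ : ∃ B : {B : Set (Set X) // IsPiBase t B},
      Cardinal.mk ↥B.1 < Cardinal.continuum := exists_lt_of_ciInf_lt hw
  intro D hD
  -- the dense sets
  let E : Set X → Set (SSPoset D) :=
    fun U => {p | ∃ k, ∃ h : k < p.1.length, ((p.1[k] : Set X) ∩ U).Nonempty}
  have hEdense : ∀ U ∈ B, DenseBelow (E U) := by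
    intro U hU p
    obtain ⟨hUo, hUne⟩ := hB.1 U hU
    obtain ⟨x, hxD, hxU⟩ := (hD p.1.length).exists_mem_open hUo hUne
    refine ⟨⟨p.1 ++ [{x}], ?_⟩, ⟨p.1.length, ?_, ?_⟩, ?_⟩
    · intro k h
      rcases lt_or_ge k p.1.length with hk | hk
      · rw [List.getElem_append_left hk]; exact p.2 k hk
      · have hk' : k = p.1.length := by
          have := h; simp at this; omega
        subst hk'
        rw [List.getElem_concat_length rfl]
        intro y hy
        simp at hy
        subst hy; exact hxD
    · simp
    · rw [List.getElem_concat_length rfl]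
      exact ⟨x, by simp, hxU⟩
    · exact ⟨[({x} : Finset X)], rfl⟩
  -- apply MA
  have hcard : Cardinal.mk ↥(E '' B) < Cardinal.continuum :=
    lt_of_le_of_lt Cardinal.mk_image_le hBlt
  obtain ⟨G, ⟨hGne, hGup, hGdir⟩, hGmeets⟩ := hMA (SSPoset D) (E '' B) hcard
    (by rintro _ ⟨U, hU, rfl⟩; exact hEdense U hU)
  -- extract selections
  classical
  refine ⟨fun k => {x | ∃ p ∈ G, ∃ h : k < p.1.length, x ∈ p.1[k]}, fun k => ⟨?_, ?_⟩, ?_⟩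
  · rintro x ⟨p, hp, h, hx⟩
    exact p.2 k h hx
  · by_cases hex : ∃ p ∈ G, k < p.1.length
    · obtain ⟨p₀, hp₀, hk₀⟩ := hex
      apply Set.Finite.subset (p₀.1[k]).finite_toSet
      rintro x ⟨p, hp, h, hx⟩
      obtain ⟨r, hr, hrp, hrp₀⟩ := hGdir p hp p₀ hp₀
      have hrp : p.1 <+: r.1 := hrp
      have hrp₀ : p₀.1 <+: r.1 := hrp₀
      have e1 : r.1[k]'(lt_of_lt_of_le h hrp.length_le) = p.1[k] := (hrp.getElem h).symm
      have e2 : r.1[k]'(lt_of_lt_of_le hk₀ hrp₀.length_le) = p₀.1[k] := (hrp₀.getElem hk₀).symm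
      rw [← e2, e1]
      exact hx
    · convert Set.finite_empty
      ext x
      simp only [Set.mem_setOf_eq, Set.mem_empty_iff_false, iff_false]
      rintro ⟨p, hp, h, _⟩
      exact hex ⟨p, hp, h⟩
  · rw [dense_iff_inter_open]
    intro V hVo hVne
    obtain ⟨U, hU, hUV⟩ := hB.2 V hVo hVne
    obtain ⟨p, hpG, k, h, x, hx, hxU⟩ := hGmeets (E U) ⟨U, hU, rfl⟩
    exact ⟨x, hUV hxU, Set.mem_iUnion.2 ⟨k, p, hpG, h, hx⟩⟩
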